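/- arXiv:2102.01624 — 3 statements merged into one kernel-verified Lean document; each statement's English description precedes it below -/
import Mathlib

section
/- Let a_1,…,a_M ∈ ℂ^M satisfy ‖a_k‖² = M for all k and ∑_{k=1}^M a_k a_k^H = M·I_M, and let γ_k > 0 for each k with ν = ∑_{k=1}^M 1/√γ_k. Then for every Hermitian positive semidefinite matrix Γ ∈ ℂ^{M×M} with tr(Γ) ≤ 1 and a_k^H Γ a_k > 0 for all k, one has ∑_{k=1}^M 1/(γ_k · a_k^H Γ a_k) ≥ ν² / M. -/
open Matrix
open scoped ComplexOrder

/-- Lower bound for the statistical precoding objective: for `M` array responses with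
`‖aₖ‖² = M` and `∑ₖ aₖ aₖᴴ = M • I`, gains `γₖ > 0`, and `ν = ∑ₖ 1/√γₖ`, every Hermitian
PSD `Γ` with `tr Γ ≤ 1` and `aₖᴴ Γ aₖ > 0` satisfies
`∑ₖ 1/(γₖ · aₖᴴ Γ aₖ) ≥ ν²/M`. -/
theorem stmt9 (M : ℕ) (a : Fin M → Fin M → ℂ)
    (hnorm : ∀ k, ∑ i, ‖a k i‖ ^ 2 = (M : ℝ))
    (horth : ∑ k, vecMulVec (a k) (star (a k)) = (M : ℂ) • (1 : Matrix (Fin M) (Fin M) ℂ))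
    (γ : Fin M → ℝ) (hγ : ∀ k, 0 < γ k)
    (Γ : Matrix (Fin M) (Fin M) ℂ) (hΓ : Γ.PosSemidef) (htr : Γ.trace ≤ 1)
    (hpos : ∀ k, 0 < (star (a k) ⬝ᵥ Γ.mulVec (a k)).re) :
    (∑ k, 1 / Real.sqrt (γ k)) ^ 2 / (M : ℝ)
      ≤ ∑ k, 1 / (γ k * (star (a k) ⬝ᵥ Γ.mulVec (a k)).re) := by
  rcases Nat.eq_zero_or_pos M with hM | hM
  · subst hM
    simp
  set q : Fin M → ℝ := fun k => (star (a k) ⬝ᵥ Γ.mulVec (a k)).re with hq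
  -- sum of q equals M * (trace Γ).re
  have hsumq : ∑ k, q k ≤ (M : ℝ) := by
    have h1 : ∑ k, (star (a k) ⬝ᵥ Γ.mulVec (a k)) = (M : ℂ) * Γ.trace := by
      have h2 : ∀ k, star (a k) ⬝ᵥ Γ.mulVec (a k)
          = (Γ * vecMulVec (a k) (star (a k))).trace := by
        intro k
        simp only [Matrix.trace, Matrix.diag, Matrix.mul_apply, vecMulVec_apply,
          dotProduct, Matrix.mulVec, Finset.mul_sum]
        apply Finset.sum_congr rfl; intro i _
        apply Finset.sum_congr rfl; intro j _
        ring
      calc ∑ k, star (a k) ⬝ᵥ Γ.mulVec (a k)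
          = ∑ k, (Γ * vecMulVec (a k) (star (a k))).trace := by
            exact Finset.sum_congr rfl fun k _ => h2 k
        _ = (Γ * ∑ k, vecMulVec (a k) (star (a k))).trace := by
            rw [Finset.mul_sum, Matrix.trace_sum]
        _ = (M : ℂ) * Γ.trace := by
            rw [horth, Matrix.mul_smul, Matrix.mul_one, Matrix.trace_smul, smul_eq_mul]
    have htrre : Γ.trace.re ≤ 1 := by
      have := (Complex.le_def.mp htr).1
      simpa using this
    have : ∑ k, q k = (M : ℝ) * Γ.trace.re := by
      have := congrArg Complex.re h1
      simpa [Complex.ext_iff, hq] using this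
    rw [this]
    have h0 : (0:ℝ) ≤ M := Nat.cast_nonneg M
    nlinarith
  -- Cauchy-Schwarz
  set S : ℝ := ∑ k, 1 / (γ k * q k) with hS
  have hSnn : 0 ≤ S := Finset.sum_nonneg fun k _ => div_nonneg zero_le_one (mul_pos (hγ k) (hpos k)).le
  have hCS : (∑ k, 1 / Real.sqrt (γ k)) ^ 2 ≤ S * ∑ k, q k := by
    have := Finset.sum_mul_sq_le_sq_mul_sq (Finset.univ : Finset (Fin M))
      (fun k => 1 / Real.sqrt (γ k * q k)) (fun k => Real.sqrt (q k))
    have heq1 : ∀ k : Fin M, (1 / Real.sqrt (γ k * q k)) * Real.sqrt (q k)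
        = 1 / Real.sqrt (γ k) := by
      intro k
      rw [Real.sqrt_mul (le_of_lt (hγ k))]
      have hqk : (0:ℝ) < Real.sqrt (q k) := Real.sqrt_pos.mpr (hpos k)
      field_simp
    have heq2 : ∀ k : Fin M, (1 / Real.sqrt (γ k * q k)) ^ 2 = 1 / (γ k * q k) := by
      intro k
      rw [div_pow, one_pow, Real.sq_sqrt (mul_pos (hγ k) (hpos k)).le]
    have heq3 : ∀ k : Fin M, Real.sqrt (q k) ^ 2 = q k := fun k =>
      Real.sq_sqrt (le_of_lt (hpos k))
    calc (∑ k, 1 / Real.sqrt (γ k)) ^ 2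
        = (∑ k, (1 / Real.sqrt (γ k * q k)) * Real.sqrt (q k)) ^ 2 := by
          congr 1; exact Finset.sum_congr rfl fun k _ => (heq1 k).symm
      _ ≤ (∑ k, (1 / Real.sqrt (γ k * q k)) ^ 2) * ∑ k, Real.sqrt (q k) ^ 2 := this
      _ = S * ∑ k, q k := by
          rw [hS]
          congr 1
          · exact Finset.sum_congr rfl fun k _ => heq2 k
          · exact Finset.sum_congr rfl fun k _ => heq3 k
  have hMpos : (0:ℝ) < M := Nat.cast_pos.mpr hM
  rw [div_le_iff₀ hMpos]
  calc (∑ k, 1 / Real.sqrt (γ k)) ^ 2 ≤ S * ∑ k, q k := hCS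
    _ ≤ S * M := by exact mul_le_mul_of_nonneg_left hsumq hSnn
end

section
/- Let a_1,…,a_M ∈ ℂ^M satisfy ‖a_k‖² = M for all k and ∑_{k=1}^M a_k a_k^H = M·I_M, let γ_k > 0, and set ν = ∑_{k=1}^M 1/√γ_k and Γ₁ = (1/(Mν)) ∑_{k=1}^M γ_k^{−1/2} a_k a_k^H. Then Γ₁ is Hermitian positive semidefinite with tr(Γ₁) = 1, a_k^H Γ₁ a_k = M/(ν √γ_k) for every k, and ∑_{k=1}^M 1/(γ_k · a_k^H Γ₁ a_k) = ν²/M; hence Γ₁ is a global minimizer of ∑_{k=1}^M 1/(γ_k · a_k^H Γ a_k) over Hermitian positive semidefinite Γ with tr(Γ) ≤ 1. -/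
open Matrix
open scoped ComplexOrder

lemma quadVV {n : Type*} [Fintype n] (x u : n → ℂ) :
    star x ⬝ᵥ (vecMulVec u (star u)) *ᵥ x
      = ((Complex.normSq (star x ⬝ᵥ u) : ℝ) : ℂ) := by
  have h : star u ⬝ᵥ x = (starRingEnd ℂ) (star x ⬝ᵥ u) := by
    simp [dotProduct, map_sum, mul_comm]
  have h2 : star x ⬝ᵥ (vecMulVec u (star u)) *ᵥ x
      = (star x ⬝ᵥ u) * (star u ⬝ᵥ x) := by
    simp only [dotProduct, mulVec, vecMulVec_apply, Pi.star_apply,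
      Finset.mul_sum, Finset.sum_mul]
    rw [Finset.sum_comm]
    exact Finset.sum_congr rfl fun i _ => Finset.sum_congr rfl fun j _ => by ring
  rw [h2, h, Complex.mul_conj]

lemma dotTrace {n : Type*} [Fintype n] (A : Matrix n n ℂ) (v : n → ℂ) :
    star v ⬝ᵥ A *ᵥ v = (A * vecMulVec v (star v)).trace := by
  simp only [trace, diag, Matrix.mul_apply, vecMulVec_apply, dotProduct, mulVec,
    Pi.star_apply, Finset.mul_sum, Finset.sum_mul]
  exact Finset.sum_congr rfl fun i _ => Finset.sum_congr rfl fun j _ => by ring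

lemma traceVV {n : Type*} [Fintype n] (v : n → ℂ) :
    (vecMulVec v (star v)).trace = ((∑ i, ‖v i‖^2 : ℝ) : ℂ) := by
  simp only [trace, diag, vecMulVec_apply, Pi.star_apply]
  push_cast
  refine Finset.sum_congr rfl fun i _ => ?_
  rw [Complex.star_def, Complex.mul_conj]
  norm_cast
  rw [Complex.normSq_eq_norm_sq]

/-- Closed-form optimal statistical transmit covariance (Proposition 2): with mutually
orthogonal array responses `aₖ` (`‖aₖ‖² = M`, `∑ₖ aₖ aₖᴴ = M • I`), gains `γₖ > 0`,
`ν = ∑ₖ 1/√γₖ`, and `Γ₁ = (1/(Mν)) ∑ₖ γₖ^{-1/2} aₖ aₖᴴ`, the matrix `Γ₁` is Hermitian PSD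
with `tr Γ₁ = 1`, `aₖᴴ Γ₁ aₖ = M/(ν √γₖ)`, the objective value is `ν²/M`, and `Γ₁` is a
global minimizer of `∑ₖ 1/(γₖ · aₖᴴ Γ aₖ)` over Hermitian PSD `Γ` with `tr Γ ≤ 1`. -/
theorem stmt10 (M : ℕ) (a : Fin M → Fin M → ℂ)
    (hnorm : ∀ k, ∑ i, ‖a k i‖ ^ 2 = (M : ℝ))
    (horth : ∑ k, vecMulVec (a k) (star (a k)) = (M : ℂ) • (1 : Matrix (Fin M) (Fin M) ℂ))
    (hM : 1 ≤ M) (γ : Fin M → ℝ) (hγ : ∀ k, 0 < γ k)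
    (ν : ℝ) (hν : ν = ∑ k, 1 / Real.sqrt (γ k))
    (Γ₁ : Matrix (Fin M) (Fin M) ℂ)
    (hΓ₁ : Γ₁ = (1 / ((M : ℝ) * ν)) •
      ∑ k, (1 / Real.sqrt (γ k)) • vecMulVec (a k) (star (a k))) :
    Γ₁.PosSemidef
    ∧ Γ₁.trace = 1
    ∧ (∀ k, star (a k) ⬝ᵥ Γ₁.mulVec (a k) = (((M : ℝ) / (ν * Real.sqrt (γ k)) : ℝ) : ℂ))
    ∧ (∑ k, 1 / (γ k * (star (a k) ⬝ᵥ Γ₁.mulVec (a k)).re) = ν ^ 2 / (M : ℝ))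
    ∧ (∀ Γ : Matrix (Fin M) (Fin M) ℂ, Γ.PosSemidef → Γ.trace ≤ 1 →
        (∀ k, 0 < (star (a k) ⬝ᵥ Γ.mulVec (a k)).re) →
        ∑ k, 1 / (γ k * (star (a k) ⬝ᵥ Γ₁.mulVec (a k)).re)
          ≤ ∑ k, 1 / (γ k * (star (a k) ⬝ᵥ Γ.mulVec (a k)).re)) := by
  have hM0 : (0:ℝ) < M := by exact_mod_cast Nat.lt_of_lt_of_le Nat.zero_lt_one hM
  have hMne : (M:ℝ) ≠ 0 := ne_of_gt hM0
  haveI : Nonempty (Fin M) := ⟨⟨0, hM⟩⟩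
  have hs : ∀ k, 0 < Real.sqrt (γ k) := fun k => Real.sqrt_pos.2 (hγ k)
  have hν0 : 0 < ν := by
    rw [hν]
    exact Finset.sum_pos (fun k _ => one_div_pos.2 (hs k)) Finset.univ_nonempty
  have hνne : ν ≠ 0 := ne_of_gt hν0
  -- quadratic form of Γ₁
  have hQ : ∀ x : Fin M → ℂ, star x ⬝ᵥ Γ₁ *ᵥ x
      = (((1/((M:ℝ)*ν)) * ∑ k, (1/Real.sqrt (γ k)) * Complex.normSq (star x ⬝ᵥ a k) : ℝ) : ℂ) := by
    intro x
    rw [dotTrace, hΓ₁, smul_mul_assoc, Finset.sum_mul, trace_smul, trace_sum]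
    simp_rw [smul_mul_assoc, trace_smul, ← dotTrace, quadVV]
    push_cast [Complex.real_smul]
    rw [Finset.mul_sum]
  -- diagonal dot products
  have hckk : ∀ k, star (a k) ⬝ᵥ a k = (M:ℂ) := by
    intro k
    have h1 := traceVV (a k)
    rw [hnorm k] at h1
    have h2 : (vecMulVec (a k) (star (a k))).trace = star (a k) ⬝ᵥ a k := by
      simp only [trace, diag, vecMulVec_apply, dotProduct, Pi.star_apply]
      exact Finset.sum_congr rfl fun i _ => mul_comm _ _
    rw [← h2, h1]; norm_cast
  have hMsq : ∀ k, Complex.normSq (star (a k) ⬝ᵥ a k) = (M:ℝ) * (M:ℝ) := by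
    intro k
    rw [hckk k]
    have : ((M:ℕ):ℂ) = (((M:ℝ)):ℂ) := by norm_cast
    rw [this, Complex.normSq_ofReal]
  -- orthogonality sum
  have horthq : ∀ k, ∑ j, Complex.normSq (star (a k) ⬝ᵥ a j) = (M:ℝ) * (M:ℝ) := by
    intro k
    have h1 : star (a k) ⬝ᵥ ((∑ j, vecMulVec (a j) (star (a j))) *ᵥ a k) = (M:ℂ) * (M:ℂ) := by
      rw [horth, smul_mulVec, one_mulVec, dotProduct_smul, hckk k, smul_eq_mul]
    rw [dotTrace, Finset.sum_mul, trace_sum] at h1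
    simp_rw [← dotTrace, quadVV] at h1
    exact_mod_cast h1
  have hczero : ∀ k j, j ≠ k → star (a k) ⬝ᵥ a j = 0 := by
    intro k j hjk
    have hsum := horthq k
    rw [← Finset.add_sum_erase Finset.univ _ (Finset.mem_univ k), hMsq k] at hsum
    have h0 : ∑ j ∈ Finset.univ.erase k, Complex.normSq (star (a k) ⬝ᵥ a j) = 0 := by
      linarith
    have := (Finset.sum_eq_zero_iff_of_nonneg
      (fun j _ => Complex.normSq_nonneg _)).mp h0 j (Finset.mem_erase.2 ⟨hjk, Finset.mem_univ j⟩)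
    exact Complex.normSq_eq_zero.mp this
  -- third bullet
  have hquad : ∀ k, star (a k) ⬝ᵥ Γ₁.mulVec (a k)
      = (((M : ℝ) / (ν * Real.sqrt (γ k)) : ℝ) : ℂ) := by
    intro k
    rw [show Γ₁.mulVec (a k) = Γ₁ *ᵥ a k from rfl, hQ (a k)]
    norm_cast
    rw [Finset.sum_eq_single k (fun j _ hjk => by rw [hczero k j hjk]; simp)
      (fun h => absurd (Finset.mem_univ k) h), hMsq k]
    field_simp [(hs k).ne']
  -- PSD
  have hPSD1 : Γ₁.PosSemidef := by
    rw [posSemidef_iff_dotProduct_mulVec]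
    constructor
    · show Γ₁ᴴ = Γ₁
      rw [hΓ₁, conjTranspose_smul, conjTranspose_sum]
      simp_rw [conjTranspose_smul]
      rw [star_trivial]
      congr 1
      refine Finset.sum_congr rfl fun k _ => ?_
      rw [star_trivial]
      congr 1
      ext i j
      simp [conjTranspose_apply, vecMulVec_apply, mul_comm]
    · intro x
      rw [hQ x, Complex.zero_le_real]
      have : 0 ≤ ∑ k, (1/Real.sqrt (γ k)) * Complex.normSq (star x ⬝ᵥ a k) :=
        Finset.sum_nonneg fun k _ => mul_nonneg (by positivity) (Complex.normSq_nonneg _)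
      positivity
  -- trace
  have htr1 : Γ₁.trace = 1 := by
    rw [hΓ₁, trace_smul, trace_sum]
    simp_rw [trace_smul, traceVV, hnorm]
    simp only [Complex.real_smul, smul_eq_mul]
    push_cast
    rw [← Finset.sum_mul]
    have : (∑ k, ((1:ℂ)/(Real.sqrt (γ k) : ℝ))) = ((ν:ℝ):ℂ) := by
      rw [hν]; push_cast; rfl
    rw [this]
    field_simp
  -- fourth bullet
  have hre : ∀ k, (star (a k) ⬝ᵥ Γ₁.mulVec (a k)).re = (M:ℝ)/(ν*Real.sqrt (γ k)) := by
    intro k; rw [hquad k, Complex.ofReal_re]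
  have hobj : ∑ k, 1 / (γ k * (star (a k) ⬝ᵥ Γ₁.mulVec (a k)).re) = ν ^ 2 / (M : ℝ) := by
    simp_rw [hre]
    have : ∀ k, 1 / (γ k * ((M:ℝ)/(ν*Real.sqrt (γ k)))) = ν/(M:ℝ) * (1/Real.sqrt (γ k)) := by
      intro k
      have h1 : Real.sqrt (γ k) * Real.sqrt (γ k) = γ k := Real.mul_self_sqrt (hγ k).le
      rw [← h1]
      rw [Real.sqrt_mul_self (hs k).le]
      field_simp [(hs k).ne']
    simp_rw [this]
    rw [← Finset.mul_sum, ← hν]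
    ring
  refine ⟨hPSD1, htr1, hquad, hobj, ?_⟩
  -- optimality
  intro Γ hPSD htr hx
  rw [hobj]
  set x : Fin M → ℝ := fun k => (star (a k) ⬝ᵥ Γ.mulVec (a k)).re with hxdef
  have hkey : ∑ k, star (a k) ⬝ᵥ Γ.mulVec (a k) = (M:ℂ) * Γ.trace := by
    simp_rw [dotTrace]
    rw [← trace_sum, ← Finset.mul_sum, horth, Matrix.mul_smul, Matrix.mul_one,
      trace_smul, smul_eq_mul]
  have hsumx : ∑ k, x k ≤ (M:ℝ) := by
    have h2 : ∑ k, x k = ((M:ℂ) * Γ.trace).re := by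
      rw [← hkey, Complex.re_sum]
    have h3 : Γ.trace.re ≤ 1 := by
      have := (Complex.le_def.mp htr).1
      simpa using this
    rw [h2]
    have : ((M:ℂ) * Γ.trace).re = (M:ℝ) * Γ.trace.re := by
      simp [Complex.mul_re]
    rw [this]
    calc (M:ℝ) * Γ.trace.re ≤ (M:ℝ) * 1 := by
          exact mul_le_mul_of_nonneg_left h3 hM0.le
      _ = (M:ℝ) := mul_one _
  have hsumxpos : 0 < ∑ k, x k := Finset.sum_pos (fun k _ => hx k) Finset.univ_nonempty
  have hCS : ν^2 / (∑ k, x k) ≤ ∑ k, 1/(γ k * x k) := by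
    have h := Finset.sq_sum_div_le_sum_sq_div Finset.univ (fun k => 1/Real.sqrt (γ k))
      (fun k _ => hx k)
    rw [← hν] at h
    refine h.trans_eq (Finset.sum_congr rfl fun k _ => ?_)
    rw [div_pow, one_pow, Real.sq_sqrt (hγ k).le, div_div]
  calc ν^2/(M:ℝ) ≤ ν^2/(∑ k, x k) := by
        apply div_le_div_of_nonneg_left (by positivity) hsumxpos hsumx
    _ ≤ ∑ k, 1/(γ k * x k) := hCS
end

section
/- Let a, b, d > 0 and c > 1, and define f(K) = log₂(1 + √(a·(K−1)·(K/c) / (b + d·K·(1 − 1/c)))) for K > 1. Then lim_{K→∞} f(K)/log₂(K) = 1/2. -/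
open Filter

/-- Asymptotics for proportionally growing antennas (`M = K/c`, `c > 1`): with
`f(K) = log₂(1 + √(a(K-1)(K/c)/(b + dK(1 - 1/c))))`, one has `f(K)/log₂ K → 1/2`. -/
theorem stmt15 (a b c d : ℝ) (ha : 0 < a) (hb : 0 < b) (hc : 1 < c) (hd : 0 < d) :
    Tendsto (fun K : ℝ =>
        Real.logb 2 (1 + Real.sqrt (a * (K - 1) * (K / c) / (b + d * K * (1 - 1 / c))))
          / Real.logb 2 K)
      atTop (nhds (1 / 2)) := by
  have hc0 : (0:ℝ) < c := lt_trans one_pos hc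
  have hcc : (0:ℝ) < 1 - 1 / c := by
    have : 1 / c < 1 := by rw [div_lt_one hc0]; exact hc
    linarith
  set g : ℝ → ℝ := fun K => a * (K - 1) * (K / c) / (b + d * K * (1 - 1 / c)) with hgdef
  set L : ℝ := (a / c) / (d * (1 - 1 / c)) with hLdef
  have hLpos : 0 < L := div_pos (div_pos ha hc0) (mul_pos hd hcc)
  have hinv : Tendsto (fun K : ℝ => 1 / K) atTop (nhds 0) := by
    simpa only [one_div] using tendsto_inv_atTop_zero
  -- Step 1 : g K / K → L
  have h1 : Tendsto (fun K => g K / K) atTop (nhds L) := by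
    have hnum : Tendsto (fun K : ℝ => a * (1 - 1 / K) / c) atTop (nhds (a / c)) := by
      have : Tendsto (fun K : ℝ => a * (1 - 1 / K) / c) atTop
          (nhds (a * (1 - 0) / c)) :=
        ((tendsto_const_nhds.sub hinv).const_mul a).div_const c
      simpa using this
    have hden : Tendsto (fun K : ℝ => b / K + d * (1 - 1 / c)) atTop
        (nhds (d * (1 - 1 / c))) := by
      have : Tendsto (fun K : ℝ => b / K + d * (1 - 1 / c)) atTop
          (nhds (b * 0 + d * (1 - 1 / c))) := by
        have hb' : Tendsto (fun K : ℝ => b / K) atTop (nhds (b * 0)) := by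
          simpa [div_eq_mul_inv, one_div] using hinv.const_mul b
        exact hb'.add tendsto_const_nhds
      simpa using this
    have := hnum.div hden (ne_of_gt (mul_pos hd hcc))
    refine Tendsto.congr' ?_ this
    filter_upwards [eventually_gt_atTop (0:ℝ)] with K hK
    have hK0 : K ≠ 0 := ne_of_gt hK
    have e1 : a * (1 - 1 / K) / c = a * (K - 1) * (K / c) / K ^ 2 := by
      field_simp
    have e2 : b / K + d * (1 - 1 / c) = (b + d * K * (1 - 1 / c)) / K := by
      field_simp
    show a * (1 - 1 / K) / c / (b / K + d * (1 - 1 / c)) = g K / K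
    rw [e1, e2, div_div_div_comm, show (K:ℝ) ^ 2 / K = K from by
      rw [pow_two, mul_div_assoc, div_self hK0, mul_one]]
  -- Step 2 : h K := 1/√K + √(g K / K) → √L
  set h : ℝ → ℝ := fun K => 1 / Real.sqrt K + Real.sqrt (g K / K) with hhdef
  have h2 : Tendsto h atTop (nhds (Real.sqrt L)) := by
    have hs : Tendsto (fun K => Real.sqrt (g K / K)) atTop (nhds (Real.sqrt L)) :=
      (Real.continuous_sqrt.continuousAt.tendsto).comp h1
    have hsT : Tendsto Real.sqrt atTop atTop := by
      refine tendsto_atTop_atTop.mpr fun M => ⟨max 0 M ^ 2, fun x hx => ?_⟩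
      refine le_trans (le_max_right 0 M) ?_
      rw [← Real.sqrt_sq (le_max_left 0 M)]
      exact Real.sqrt_le_sqrt hx
    have hz : Tendsto (fun K : ℝ => 1 / Real.sqrt K) atTop (nhds 0) := by
      simpa only [one_div, Function.comp_def] using tendsto_inv_atTop_zero.comp hsT
    have := hz.add hs
    rw [zero_add] at this
    exact this
  have hsL : (0:ℝ) < Real.sqrt L := Real.sqrt_pos.mpr hLpos
  -- Step 3 : log (h K) / log K → 0
  have h3 : Tendsto (fun K => Real.log (h K) / Real.log K) atTop (nhds 0) := by
    have hlog : Tendsto (fun K => Real.log (h K)) atTop (nhds (Real.log (Real.sqrt L))) :=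
      ((Real.continuousAt_log (ne_of_gt hsL)).tendsto).comp h2
    have hinvlog : Tendsto (fun K : ℝ => (Real.log K)⁻¹) atTop (nhds 0) := by
      simpa only [Function.comp_def] using tendsto_inv_atTop_zero.comp Real.tendsto_log_atTop
    have := hlog.mul hinvlog
    simpa [div_eq_mul_inv] using this
  -- Final : eventual equality of the ratio with log (h K)/log K + 1/2
  have hfin : Tendsto (fun K => Real.log (h K) / Real.log K + 1 / 2) atTop
      (nhds (1 / 2)) := by
    simpa using h3.add (tendsto_const_nhds : Tendsto (fun _ : ℝ => (1:ℝ)/2) atTop _)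
  refine Tendsto.congr' ?_ hfin
  filter_upwards [eventually_gt_atTop (1:ℝ)] with K hK1
  have hK0 : (0:ℝ) < K := lt_trans one_pos hK1
  have hlogK : 0 < Real.log K := Real.log_pos hK1
  have hsK : 0 < Real.sqrt K := Real.sqrt_pos.mpr hK0
  have hgK : 0 ≤ g K := by
    apply div_nonneg
    · have : 0 ≤ K - 1 := by linarith
      positivity
    · positivity
  have hgKK : 0 ≤ g K / K := div_nonneg hgK hK0.le
  have hkey : 1 + Real.sqrt (g K) = h K * Real.sqrt K := by
    simp only [hhdef]
    rw [add_mul, one_div, inv_mul_cancel₀ (ne_of_gt hsK),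
      ← Real.sqrt_mul hgKK, div_mul_cancel₀ _ (ne_of_gt hK0)]
  have hhpos : 0 < h K := by
    simp only [hhdef]
    have : 0 ≤ Real.sqrt (g K / K) := Real.sqrt_nonneg _
    positivity
  have hlog2 : Real.log 2 ≠ 0 :=
    ne_of_gt (Real.log_pos (by norm_num : (1:ℝ) < 2))
  have heq : Real.logb 2 (1 + Real.sqrt (g K)) / Real.logb 2 K
      = Real.log (h K) / Real.log K + 1 / 2 := by
    rw [Real.logb, Real.logb, div_div_div_comm, div_self hlog2, div_one, hkey,
      Real.log_mul (ne_of_gt hhpos) (ne_of_gt hsK), Real.log_sqrt hK0.le,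
      add_div, div_right_comm, div_self (ne_of_gt hlogK)]
  exact heq.symm
end
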